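/- arXiv:1603.02049 — 4 statements merged into one kernel-verified Lean document; each statement's English description precedes it below -/
import Mathlib

section
/- Let (ε_n)_{n∈ℤ} be H-white noise, φ, θ_1, …, θ_q bounded operators on H with ‖φ^{j₀}‖ < 1 for some j₀. Then the series X_n = ∑_{j=0}^{q-1} (∑_{k=0}^j φ^{j−k}θ_k) ε_{n−j} + ∑_{j=q}^∞ φ^{j−q}(∑_{k=0}^q φ^{q−k}θ_k) ε_{n−j} (with θ_0 = I) converges in L²_H and almost surely. -/
open MeasureTheory Filter
open scoped RealInnerProductSpace ENNReal NNReal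

/-- If some power of `a` has norm `< 1`, then the norms of all powers are summable. -/
private lemma summable_norm_pow_aux {A : Type*} [NormedRing A] (a : A)
    (h : ∃ j₀ : ℕ, ‖a ^ j₀‖ < 1) : Summable fun m : ℕ => ‖a ^ m‖ := by
  obtain ⟨j₀, hj⟩ := h
  rcases Nat.eq_zero_or_pos j₀ with h0 | hpos
  · subst h0
    rw [pow_zero] at hj
    have hz : ∀ m : ℕ, ‖a ^ m‖ = 0 := by
      intro m
      have h1 : ‖a ^ m‖ ≤ ‖(1 : A)‖ * ‖a ^ m‖ := by
        calc ‖a ^ m‖ = ‖(1 : A) * a ^ m‖ := by rw [one_mul]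
          _ ≤ ‖(1 : A)‖ * ‖a ^ m‖ := norm_mul_le _ _
      nlinarith [norm_nonneg (a ^ m)]
    simp only [hz]
    exact summable_zero
  · set r : ℝ := ‖a ^ j₀‖ with hrdef
    have r0 : (0 : ℝ) ≤ r := norm_nonneg _
    set B : ℝ := max ‖(1 : A)‖ 1 with hBdef
    have hB1 : (1 : ℝ) ≤ B := le_max_right _ _
    set M : ℝ := B * (max 1 ‖a‖) ^ j₀ with hMdef
    have hmax1 : (1 : ℝ) ≤ max 1 ‖a‖ := le_max_left _ _
    have hM0 : (0 : ℝ) ≤ M := by positivity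
    have h3 : ∀ s : ℕ, s < j₀ → ‖a ^ s‖ ≤ M := by
      intro s hs
      rcases Nat.eq_zero_or_pos s with rfl | hspos
      · rw [pow_zero]
        calc ‖(1 : A)‖ ≤ B := le_max_left _ _
          _ = B * 1 := (mul_one B).symm
          _ ≤ M := by
              rw [hMdef]
              apply mul_le_mul_of_nonneg_left _ (by positivity)
              calc (1 : ℝ) = 1 ^ j₀ := (one_pow _).symm
                _ ≤ (max 1 ‖a‖) ^ j₀ := pow_le_pow_left₀ zero_le_one hmax1 j₀
      · calc ‖a ^ s‖ ≤ ‖a‖ ^ s := norm_pow_le' a hspos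
          _ ≤ (max 1 ‖a‖) ^ s := by
              apply pow_le_pow_left₀ (norm_nonneg a) (le_max_right _ _)
          _ ≤ (max 1 ‖a‖) ^ j₀ := pow_le_pow_right₀ hmax1 hs.le
          _ = 1 * (max 1 ‖a‖) ^ j₀ := (one_mul _).symm
          _ ≤ M := by
              rw [hMdef]
              apply mul_le_mul_of_nonneg_right hB1 (by positivity)
    have h2 : ∀ k : ℕ, ‖(a ^ j₀) ^ k‖ ≤ B * r ^ k := by
      intro k
      rcases Nat.eq_zero_or_pos k with rfl | hk
      · rw [pow_zero, pow_zero, mul_one]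
        exact le_max_left _ _
      · calc ‖(a ^ j₀) ^ k‖ ≤ r ^ k := norm_pow_le' _ hk
          _ = 1 * r ^ k := (one_mul _).symm
          _ ≤ B * r ^ k := by
              apply mul_le_mul_of_nonneg_right hB1 (by positivity)
    have hbound : ∀ k s : ℕ, s < j₀ → ‖a ^ (k * j₀ + s)‖ ≤ B * M * r ^ k := by
      intro k s hs
      have h1 : a ^ (k * j₀ + s) = (a ^ j₀) ^ k * a ^ s := by
        rw [pow_add, ← pow_mul, Nat.mul_comm]
      calc ‖a ^ (k * j₀ + s)‖ ≤ ‖(a ^ j₀) ^ k‖ * ‖a ^ s‖ := by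
            rw [h1]; exact norm_mul_le _ _
        _ ≤ (B * r ^ k) * M := by
            apply mul_le_mul (h2 k) (h3 s hs) (norm_nonneg _) (by positivity)
        _ = B * M * r ^ k := by ring
    haveI : NeZero j₀ := ⟨hpos.ne'⟩
    rw [← (Nat.divModEquiv j₀).symm.summable_iff]
    have hgsum : Summable (fun p : ℕ × Fin j₀ => B * M * r ^ p.1) := by
      apply (summable_prod_of_nonneg (fun p => by positivity)).mpr
      refine ⟨fun k => Summable.of_finite, ?_⟩
      simp only [tsum_fintype, Finset.sum_const, Finset.card_univ, Fintype.card_fin,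
        nsmul_eq_mul]
      exact ((summable_geometric_of_lt_one r0 hj).mul_left (B * M)).mul_left (j₀ : ℝ)
    apply hgsum.of_nonneg_of_le (fun p => norm_nonneg _)
    intro p
    exact hbound p.1 p.2 p.2.2

/-- The squared `L²` norm as an integral. -/
private lemma integral_norm_sq_eq_aux {Ω H : Type*} [MeasurableSpace Ω] {μ : Measure Ω}
    [NormedAddCommGroup H] [InnerProductSpace ℝ H] (f : Lp H 2 μ) :
    ∫ ω, ‖f ω‖ ^ 2 ∂μ = ‖f‖ ^ 2 := by
  have h := MeasureTheory.L2.inner_def (𝕜 := ℝ) f f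
  rw [real_inner_self_eq_norm_sq] at h
  simp_rw [real_inner_self_eq_norm_sq] at h
  exact h.symm

private lemma coeFn_finset_sum_aux {Ω H : Type*} [MeasurableSpace Ω] {μ : Measure Ω}
    [NormedAddCommGroup H] {ι : Type*} (s : Finset ι) (f : ι → Lp H 2 μ) :
    (↑(∑ i ∈ s, f i) : Ω → H) =ᵐ[μ] fun ω => ∑ i ∈ s, f i ω := by
  classical
  induction s using Finset.induction_on with
  | empty => simp only [Finset.sum_empty]; exact MeasureTheory.Lp.coeFn_zero H 2 μ
  | insert a s hx ih =>
    rw [Finset.sum_insert hx]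
    filter_upwards [MeasureTheory.Lp.coeFn_add (f a) (∑ i ∈ s, f i), ih] with ω h1 h2
    rw [h1]
    simp only [Pi.add_apply]
    rw [h2, Finset.sum_insert hx]

/-- The causal series defining the solution of the functional ARMA(1,q) equation
converges almost surely and in `L²_H`. -/
theorem stmt6 {Ω H : Type*} [MeasurableSpace Ω] (μ : Measure Ω) [IsProbabilityMeasure μ]
    [NormedAddCommGroup H] [InnerProductSpace ℝ H] [CompleteSpace H]
    [SecondCountableTopology H]
    (ε : ℤ → Ω → H) (σ2 : ℝ)
    (hmem : ∀ n, MemLp (ε n) 2 μ)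
    (hmean : ∀ n (y : H), ∫ ω, ⟪ε n ω, y⟫ ∂μ = 0)
    (hvar : ∀ n, ∫ ω, ‖ε n ω‖ ^ 2 ∂μ = σ2)
    (hcov : ∀ n (y : H), ∫ ω, ⟪ε n ω, y⟫ • ε n ω ∂μ = ∫ ω, ⟪ε 0 ω, y⟫ • ε 0 ω ∂μ)
    (hcross : ∀ n m : ℤ, n ≠ m → ∀ y : H, ∫ ω, ⟪ε m ω, y⟫ • ε n ω ∂μ = 0)
    (q : ℕ) (φ : H →L[ℝ] H) (θ : ℕ → (H →L[ℝ] H)) (hθ0 : θ 0 = 1)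
    (hφ : ∃ j₀ : ℕ, ‖φ ^ j₀‖ < 1)
    (ψ : ℕ → (H →L[ℝ] H))
    (hψ : ∀ j : ℕ, ψ j =
      if j < q then ∑ k ∈ Finset.range (j + 1), (φ ^ (j - k)) ∘L θ k
      else (φ ^ (j - q)) ∘L ∑ k ∈ Finset.range (q + 1), (φ ^ (q - k)) ∘L θ k) :
    ∀ n : ℤ,
      (∀ᵐ ω ∂μ, Summable fun j : ℕ => (ψ j) (ε (n - j) ω)) ∧
      ∃ X : Ω → H, MemLp X 2 μ ∧
        Tendsto (fun m : ℕ =>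
            ∫ ω, ‖(∑ j ∈ Finset.range m, (ψ j) (ε (n - j) ω)) - X ω‖ ^ 2 ∂μ)
          atTop (nhds 0) := by
  -- summability of the operator norms
  have hψsum : Summable fun j : ℕ => ‖ψ j‖ := by
    set C := ∑ k ∈ Finset.range (q + 1), (φ ^ (q - k)) ∘L θ k with hC
    have h1 : Summable fun i : ℕ => ‖φ ^ i‖ * ‖C‖ :=
      (summable_norm_pow_aux φ hφ).mul_right _
    apply (summable_nat_add_iff q).mp
    apply h1.of_nonneg_of_le (fun _ => norm_nonneg _)
    intro i
    rw [hψ (i + q), if_neg (by omega), Nat.add_sub_cancel]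
    exact ContinuousLinearMap.opNorm_comp_le _ _
  have hσ2 : 0 ≤ σ2 := by
    rw [← hvar 0]
    exact integral_nonneg fun ω => by positivity
  intro n
  -- the L² elements
  set e : ℤ → Lp H 2 μ := fun m => (hmem m).toLp (ε m) with he
  set f : ℕ → Lp H 2 μ := fun j => (ψ j).compLp (e (n - j)) with hfdef
  have henorm : ∀ m : ℤ, ‖e m‖ ≤ Real.sqrt σ2 := by
    intro m
    have h2 : ‖e m‖ ^ 2 = σ2 := by
      rw [← integral_norm_sq_eq_aux (e m), ← hvar m]
      apply integral_congr_ae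
      filter_upwards [(hmem m).coeFn_toLp] with ω hω
      rw [he]; rw [hω]
    rw [← Real.sqrt_sq (norm_nonneg (e m)), h2]
  have hfnorm : ∀ j, ‖f j‖ ≤ ‖ψ j‖ * Real.sqrt σ2 := fun j =>
    (ContinuousLinearMap.norm_compLp_le _ _).trans
      (mul_le_mul_of_nonneg_left (henorm _) (norm_nonneg _))
  have hfsummable : Summable f :=
    Summable.of_norm_bounded (hψsum.mul_right (Real.sqrt σ2)) hfnorm
  set S : Lp H 2 μ := ∑' j, f j with hSdef
  have htend : Tendsto (fun m => ∑ j ∈ Finset.range m, f j) atTop (nhds S) :=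
    hfsummable.hasSum.tendsto_sum_nat
  -- a.e. identification of f j
  have hfcoe : ∀ j : ℕ, (↑(f j) : Ω → H) =ᵐ[μ] fun ω => (ψ j) (ε (n - j) ω) := by
    intro j
    filter_upwards [(ψ j).coeFn_compLp (e (n - j)), (hmem (n - j)).coeFn_toLp] with ω h1 h2
    rw [hfdef]
    simp only at h1 ⊢
    rw [h1, he]
    simp only
    rw [h2]
  constructor
  · -- almost sure convergence
    set g : ℕ → Ω → H := fun j ω => (ψ j) (ε (n - j) ω) with hg
    have hgmem : ∀ j, MemLp (g j) 2 μ := fun j => (ψ j).comp_memLp' (hmem (n - j))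
    have hgint : ∀ j, Integrable (g j) μ := fun j => (hgmem j).integrable one_le_two
    have hεint : ∀ m : ℤ, Integrable (ε m) μ := fun m => (hmem m).integrable one_le_two
    have hεsq : ∀ m : ℤ, Integrable (fun ω => ‖ε m ω‖ ^ 2) μ := fun m =>
      (hmem m).norm.integrable_sq
    set K : ℝ := (σ2 + 1) / 2 with hK
    have hK0 : 0 ≤ K := by positivity
    have hεL1 : ∀ m : ℤ, ∫ ω, ‖ε m ω‖ ∂μ ≤ K := by
      intro m
      have h1 : ∫ ω, ‖ε m ω‖ ∂μ ≤ ∫ ω, (‖ε m ω‖ ^ 2 + 1) / 2 ∂μ := by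
        apply integral_mono (hεint m).norm (((hεsq m).add (integrable_const 1)).div_const 2)
        intro ω
        simp only [Pi.add_apply]
        have := norm_nonneg (ε m ω)
        nlinarith [sq_nonneg (‖ε m ω‖ - 1)]
      rw [integral_div, integral_add (hεsq m) (integrable_const 1), hvar m,
        integral_const, probReal_univ] at h1
      simpa [hK] using h1
    have hgL1 : ∀ j, ∫ ω, ‖g j ω‖ ∂μ ≤ ‖ψ j‖ * K := by
      intro j
      calc ∫ ω, ‖g j ω‖ ∂μ ≤ ∫ ω, ‖ψ j‖ * ‖ε (n - j) ω‖ ∂μ := by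
            apply integral_mono (hgint j).norm ((hεint _).norm.const_mul _)
            intro ω
            exact (ψ j).le_opNorm _
        _ = ‖ψ j‖ * ∫ ω, ‖ε (n - j) ω‖ ∂μ := integral_const_mul _ _
        _ ≤ ‖ψ j‖ * K := mul_le_mul_of_nonneg_left (hεL1 _) (norm_nonneg _)
    have hmeas : ∀ j, AEMeasurable (fun ω => (‖g j ω‖₊ : ℝ≥0∞)) μ := fun j =>
      (hgmem j).aestronglyMeasurable.enorm
    have hlt : ∫⁻ ω, ∑' j, (‖g j ω‖₊ : ℝ≥0∞) ∂μ ≠ ⊤ := by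
      rw [lintegral_tsum hmeas]
      have hb : ∀ j, ∫⁻ ω, (‖g j ω‖₊ : ℝ≥0∞) ∂μ ≤ ENNReal.ofReal (‖ψ j‖ * K) := by
        intro j
        exact (ofReal_integral_norm_eq_lintegral_enorm (hgint j)).symm.trans_le
          (ENNReal.ofReal_le_ofReal (hgL1 j))
      apply ne_top_of_le_ne_top _ (ENNReal.tsum_le_tsum hb)
      rw [← ENNReal.ofReal_tsum_of_nonneg (fun j => mul_nonneg (norm_nonneg _) hK0)
        (hψsum.mul_right K)]
      exact ENNReal.ofReal_ne_top
    filter_upwards [ae_lt_top' (AEMeasurable.ennreal_tsum hmeas) hlt] with ω hω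
    have h1 : Summable fun j => ‖g j ω‖₊ := ENNReal.tsum_coe_ne_top_iff_summable.mp hω.ne
    have h2 : Summable fun j => ‖g j ω‖ := by
      have := NNReal.summable_coe.mpr h1
      simpa [coe_nnnorm] using this
    exact h2.of_norm
  · -- L² convergence
    refine ⟨(S : Ω → H), MeasureTheory.Lp.memLp S, ?_⟩
    have hcongr : ∀ m : ℕ,
        ∫ ω, ‖(∑ j ∈ Finset.range m, (ψ j) (ε (n - j) ω)) - (S : Ω → H) ω‖ ^ 2 ∂μ
          = ‖(∑ j ∈ Finset.range m, f j) - S‖ ^ 2 := by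
      intro m
      rw [← integral_norm_sq_eq_aux ((∑ j ∈ Finset.range m, f j) - S)]
      apply integral_congr_ae
      have hsum := coeFn_finset_sum_aux (Finset.range m) f
      have hall : ∀ᵐ ω ∂μ, ∀ j ∈ Finset.range m,
          (↑(f j) : Ω → H) ω = (ψ j) (ε (n - j) ω) :=
        (ae_ball_iff (Finset.range m).countable_toSet).mpr fun j _ => hfcoe j
      filter_upwards [MeasureTheory.Lp.coeFn_sub (∑ j ∈ Finset.range m, f j) S,
        hsum, hall] with ω h1 h2 h3
      rw [h1, Pi.sub_apply, h2, Finset.sum_congr rfl h3]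
    have h0 : Tendsto (fun m => ‖(∑ j ∈ Finset.range m, f j) - S‖ ^ 2) atTop (nhds 0) := by
      have h1 : Tendsto (fun m => (∑ j ∈ Finset.range m, f j) - S) atTop (nhds 0) :=
        tendsto_sub_nhds_zero_iff.mpr htend
      have h2 := h1.norm
      rw [norm_zero] at h2
      have h3 := h2.pow 2
      simpa using h3
    simpa only [hcongr] using h0
end

section
/- Under Assumption ‖φ^{j₀}‖ < 1 for some j₀ ∈ ℕ, the process X_n = ∑_{j=0}^{q-1} (∑_{k=0}^j φ^{j−k}θ_k) ε_{n−j} + ∑_{j=q}^∞ φ^{j−q}(∑_{k=0}^q φ^{q−k}θ_k) ε_{n−j} satisfies the functional ARMA(1,q) equation X_n = φ X_{n−1} + ∑_{j=1}^q θ_j ε_{n−j} + ε_n for all n ∈ ℤ. -/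
open MeasureTheory
open scoped RealInnerProductSpace

lemma aux_summable_pow {A : Type*} [NormedRing A] [NormOneClass A] {x : A} {m : ℕ}
    (hm : m ≠ 0) (hx : ‖x ^ m‖ < 1) : Summable (fun j => ‖x ^ j‖) := by
  haveI : NeZero m := ⟨hm⟩
  set ρ := ‖x ^ m‖ with hρ
  have hρ0 : 0 ≤ ρ := norm_nonneg _
  set C := (max 1 ‖x‖) ^ m with hC
  have hC0 : 0 ≤ C := pow_nonneg (le_trans zero_le_one (le_max_left _ _)) _
  have hgeo : Summable (fun a : ℕ => ρ ^ a * C) :=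
    (summable_geometric_of_lt_one hρ0 hx).mul_right C
  have hprod : Summable (fun p : ℕ × Fin m => ρ ^ p.1 * C) := by
    rw [summable_prod_of_nonneg (by intro p; positivity)]
    refine ⟨fun a => Summable.of_finite, ?_⟩
    simpa [tsum_fintype, Finset.sum_const, nsmul_eq_mul, mul_comm, mul_assoc, mul_left_comm]
      using hgeo.mul_left (m : ℝ)
  have hsum2 : Summable (fun j : ℕ => ρ ^ (j / m) * C) := by
    have := hprod.comp_injective (Nat.divModEquiv m).injective
    simpa [Function.comp_def, Nat.divModEquiv] using this
  refine Summable.of_nonneg_of_le (fun j => norm_nonneg _) (fun j => ?_) hsum2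
  calc ‖x ^ j‖ = ‖(x ^ m) ^ (j / m) * x ^ (j % m)‖ := by
        rw [← pow_mul, ← pow_add, Nat.div_add_mod]
    _ ≤ ‖(x ^ m) ^ (j / m)‖ * ‖x ^ (j % m)‖ := norm_mul_le _ _
    _ ≤ ρ ^ (j / m) * C := by
        refine mul_le_mul (norm_pow_le _ _) ?_ (norm_nonneg _)
          (pow_nonneg hρ0 _)
        calc ‖x ^ (j % m)‖ ≤ ‖x‖ ^ (j % m) := norm_pow_le _ _
          _ ≤ (max 1 ‖x‖) ^ (j % m) := pow_le_pow_left₀ (norm_nonneg _) (le_max_right _ _) _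
          _ ≤ C := pow_le_pow_right₀ (le_max_left _ _) (Nat.mod_lt _ (Nat.pos_of_ne_zero hm)).le

lemma aux_psi_rec {H : Type*} [NormedAddCommGroup H] [NormedSpace ℝ H]
    (q : ℕ) (φ : H →L[ℝ] H) (θ : ℕ → (H →L[ℝ] H)) (ψ : ℕ → (H →L[ℝ] H))
    (hψ : ∀ j : ℕ, ψ j =
      if j < q then ∑ k ∈ Finset.range (j + 1), (φ ^ (j - k)) ∘L θ k
      else (φ ^ (j - q)) ∘L ∑ k ∈ Finset.range (q + 1), (φ ^ (q - k)) ∘L θ k)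
    (j : ℕ) : ψ (j + 1) = φ ∘L ψ j + (if j + 1 ≤ q then θ (j + 1) else 0) := by
  simp only [← ContinuousLinearMap.mul_def]
  by_cases h : j + 1 ≤ q
  · have hjq : j < q := h
    have hfull : ψ (j + 1) = ∑ k ∈ Finset.range (j + 1 + 1), (φ ^ (j + 1 - k)) * θ k := by
      rcases lt_or_eq_of_le h with h' | h'
      · rw [hψ]; simp only [if_pos h', ← ContinuousLinearMap.mul_def]
      · subst h'
        rw [hψ (j + 1), if_neg (lt_irrefl _)]
        simp only [Nat.sub_self, pow_zero, ← ContinuousLinearMap.mul_def, one_mul]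
    rw [hfull, Finset.sum_range_succ, hψ j, if_pos hjq]
    simp only [← ContinuousLinearMap.mul_def, if_pos h, Nat.sub_self, pow_zero, one_mul]
    congr 1
    rw [Finset.mul_sum]
    refine Finset.sum_congr rfl (fun k hk => ?_)
    have hk' : k ≤ j := Nat.lt_succ_iff.mp (Finset.mem_range.mp hk)
    rw [← mul_assoc, ← pow_succ']
    congr 2
    omega
  · have hq : q ≤ j := by omega
    rw [hψ (j + 1), hψ j, if_neg (by omega), if_neg (by omega), if_neg h, add_zero]
    simp only [← ContinuousLinearMap.mul_def, ← mul_assoc]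
    congr 1
    rw [← pow_succ']
    congr 1
    omega

lemma aux_psi_zero {H : Type*} [NormedAddCommGroup H] [NormedSpace ℝ H]
    (q : ℕ) (φ : H →L[ℝ] H) (θ : ℕ → (H →L[ℝ] H)) (hθ0 : θ 0 = 1) (ψ : ℕ → (H →L[ℝ] H))
    (hψ : ∀ j : ℕ, ψ j =
      if j < q then ∑ k ∈ Finset.range (j + 1), (φ ^ (j - k)) ∘L θ k
      else (φ ^ (j - q)) ∘L ∑ k ∈ Finset.range (q + 1), (φ ^ (q - k)) ∘L θ k)
    : ψ 0 = 1 := by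
  rw [hψ 0]
  split_ifs with h
  · simp [hθ0, ContinuousLinearMap.one_def, ContinuousLinearMap.comp_id,
      ContinuousLinearMap.id_comp]
  · have hq : q = 0 := by omega
    subst hq
    simp [hθ0, ContinuousLinearMap.one_def, ContinuousLinearMap.comp_id,
      ContinuousLinearMap.id_comp]

lemma aux_psi_summable {H : Type*} [NormedAddCommGroup H] [NormedSpace ℝ H] [Nontrivial H]
    (q : ℕ) (φ : H →L[ℝ] H) (θ : ℕ → (H →L[ℝ] H))
    (hφ : ∃ j₀ : ℕ, ‖φ ^ j₀‖ < 1)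
    (ψ : ℕ → (H →L[ℝ] H))
    (hψ : ∀ j : ℕ, ψ j =
      if j < q then ∑ k ∈ Finset.range (j + 1), (φ ^ (j - k)) ∘L θ k
      else (φ ^ (j - q)) ∘L ∑ k ∈ Finset.range (q + 1), (φ ^ (q - k)) ∘L θ k) :
    Summable (fun j => ‖ψ j‖) := by
  obtain ⟨j₀, hj₀⟩ := hφ
  have hj₀0 : j₀ ≠ 0 := by
    rintro rfl
    rw [pow_zero, norm_one] at hj₀
    exact absurd hj₀ (lt_irrefl 1)
  have hs : Summable (fun j => ‖φ ^ j‖) := aux_summable_pow hj₀0 hj₀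
  rw [← summable_nat_add_iff q]
  set S := ∑ k ∈ Finset.range (q + 1), (φ ^ (q - k)) ∘L θ k with hS
  refine Summable.of_nonneg_of_le (fun j => norm_nonneg _) (fun j => ?_) (hs.mul_right ‖S‖)
  rw [hψ (j + q), if_neg (by omega)]
  have : j + q - q = j := by omega
  rw [this]
  exact (φ ^ j).opNorm_comp_le S

lemma aux_ae_summable {Ω H : Type*} [MeasurableSpace Ω] (μ : Measure Ω) [IsProbabilityMeasure μ]
    [NormedAddCommGroup H] [InnerProductSpace ℝ H] [CompleteSpace H]
    [SecondCountableTopology H]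
    (ε : ℤ → Ω → H) (σ2 : ℝ)
    (hmem : ∀ n, MemLp (ε n) 2 μ)
    (hvar : ∀ n, ∫ ω, ‖ε n ω‖ ^ 2 ∂μ = σ2)
    (ψ : ℕ → (H →L[ℝ] H)) (hψs : Summable (fun j => ‖ψ j‖)) (m : ℤ) :
    ∀ᵐ ω ∂μ, Summable (fun j : ℕ => ‖(ψ j) (ε (m - j) ω)‖) := by
  have hB : ∀ k : ℤ, ∫⁻ ω, (‖ε k ω‖₊ : ENNReal) ∂μ ≤ (ENNReal.ofReal σ2) ^ ((1:ℝ)/2) := by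
    intro k
    have h1 : ∫⁻ ω, (‖ε k ω‖₊ : ENNReal) ∂μ = eLpNorm (ε k) 1 μ :=
      (eLpNorm_one_eq_lintegral_enorm (f := ε k)).symm
    have h2 : eLpNorm (ε k) 1 μ ≤ eLpNorm (ε k) 2 μ :=
      eLpNorm_le_eLpNorm_of_exponent_le (by norm_num) (hmem k).1
    have h3 : eLpNorm (ε k) 2 μ = (ENNReal.ofReal σ2) ^ ((1:ℝ)/2) := by
      rw [eLpNorm_eq_lintegral_rpow_enorm_toReal (by norm_num) (by norm_num)]
      congr 1
      · rw [← hvar k, ofReal_integral_eq_lintegral_ofReal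
          ((memLp_two_iff_integrable_sq_norm (hmem k).1).mp (hmem k))
          (Filter.Eventually.of_forall (fun ω => by positivity))]
        refine lintegral_congr fun ω => ?_
        rw [← ofReal_norm, ENNReal.toReal_ofNat, ENNReal.rpow_two,
          ← ENNReal.ofReal_pow (norm_nonneg _)]
    rw [h1, ← h3]
    exact h2
  set B : ENNReal := (ENNReal.ofReal σ2) ^ ((1:ℝ)/2) with hBdef
  have hBlt : B ≠ ⊤ := by
    refine ENNReal.rpow_ne_top_of_nonneg (by norm_num) ENNReal.ofReal_ne_top
  have hmeas : ∀ j : ℕ, AEMeasurable (fun ω => (‖(ψ j) (ε (m - j) ω)‖₊ : ENNReal)) μ :=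
    fun j => ((ψ j).continuous.comp_aestronglyMeasurable (hmem (m - j)).1).enorm
  have hlint : ∫⁻ ω, ∑' j : ℕ, (‖(ψ j) (ε (m - j) ω)‖₊ : ENNReal) ∂μ ≠ ⊤ := by
    rw [lintegral_tsum hmeas]
    have hle : ∀ j : ℕ, ∫⁻ ω, (‖(ψ j) (ε (m - j) ω)‖₊ : ENNReal) ∂μ ≤ (‖ψ j‖₊ : ENNReal) * B := by
      intro j
      calc ∫⁻ ω, (‖(ψ j) (ε (m - j) ω)‖₊ : ENNReal) ∂μ
          ≤ ∫⁻ ω, (‖ψ j‖₊ : ENNReal) * (‖ε (m - j) ω‖₊ : ENNReal) ∂μ := by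
            refine lintegral_mono (fun ω => ?_)
            rw [← ENNReal.coe_mul]
            exact ENNReal.coe_le_coe.mpr ((ψ j).le_opNNNorm (ε (m - j) ω))
        _ = (‖ψ j‖₊ : ENNReal) * ∫⁻ ω, (‖ε (m - j) ω‖₊ : ENNReal) ∂μ :=
            lintegral_const_mul' _ _ ENNReal.coe_ne_top
        _ ≤ (‖ψ j‖₊ : ENNReal) * B := mul_le_mul_right (hB _) _
    refine ne_top_of_le_ne_top ?_ (ENNReal.tsum_le_tsum hle)
    rw [ENNReal.tsum_mul_right]
    refine ENNReal.mul_ne_top ?_ hBlt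
    exact ENNReal.tsum_coe_ne_top_iff_summable.mpr
      (hψs.toNNReal.congr (fun j => norm_toNNReal))
  have := ae_lt_top' (AEMeasurable.ennreal_tsum hmeas) hlint
  filter_upwards [this] with ω hω
  have hnn : Summable (fun j : ℕ => ‖(ψ j) (ε (m - j) ω)‖₊) :=
    ENNReal.tsum_coe_ne_top_iff_summable.mp hω.ne
  exact (NNReal.summable_coe.mpr hnn).congr (fun j => by simp)

/-- The causal series solves the functional ARMA(1,q) equation
`X_n = φ X_{n-1} + ∑_{j=1}^q θ_j ε_{n-j} + ε_n`. -/
theorem stmt7 {Ω H : Type*} [MeasurableSpace Ω] (μ : Measure Ω) [IsProbabilityMeasure μ]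
    [NormedAddCommGroup H] [InnerProductSpace ℝ H] [CompleteSpace H]
    [SecondCountableTopology H]
    (ε : ℤ → Ω → H) (σ2 : ℝ)
    (hmem : ∀ n, MemLp (ε n) 2 μ)
    (hmean : ∀ n (y : H), ∫ ω, ⟪ε n ω, y⟫ ∂μ = 0)
    (hvar : ∀ n, ∫ ω, ‖ε n ω‖ ^ 2 ∂μ = σ2)
    (hcov : ∀ n (y : H), ∫ ω, ⟪ε n ω, y⟫ • ε n ω ∂μ = ∫ ω, ⟪ε 0 ω, y⟫ • ε 0 ω ∂μ)
    (hcross : ∀ n m : ℤ, n ≠ m → ∀ y : H, ∫ ω, ⟪ε m ω, y⟫ • ε n ω ∂μ = 0)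
    (q : ℕ) (φ : H →L[ℝ] H) (θ : ℕ → (H →L[ℝ] H)) (hθ0 : θ 0 = 1)
    (hφ : ∃ j₀ : ℕ, ‖φ ^ j₀‖ < 1)
    (ψ : ℕ → (H →L[ℝ] H))
    (hψ : ∀ j : ℕ, ψ j =
      if j < q then ∑ k ∈ Finset.range (j + 1), (φ ^ (j - k)) ∘L θ k
      else (φ ^ (j - q)) ∘L ∑ k ∈ Finset.range (q + 1), (φ ^ (q - k)) ∘L θ k)
    (X : ℤ → Ω → H) (hX : ∀ n ω, X n ω = ∑' j : ℕ, (ψ j) (ε (n - j) ω)) :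
    ∀ n : ℤ, ∀ᵐ ω ∂μ,
      X n ω = φ (X (n - 1) ω) + (∑ j ∈ Finset.Icc 1 q, (θ j) (ε (n - j) ω)) + ε n ω := by
  intro n
  rcases subsingleton_or_nontrivial H with hH | hH
  · filter_upwards with ω
    exact Subsingleton.elim _ _
  · have hψs : Summable (fun j => ‖ψ j‖) := aux_psi_summable q φ θ hφ ψ hψ
    have hψ0 : ψ 0 = 1 := aux_psi_zero q φ θ hθ0 ψ hψ
    have hrec := aux_psi_rec q φ θ ψ hψ
    filter_upwards [aux_ae_summable μ ε σ2 hmem hvar ψ hψs n,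
      aux_ae_summable μ ε σ2 hmem hvar ψ hψs (n - 1)] with ω hω1 hω2
    rw [hX n, hX (n - 1)]
    have hf : Summable (fun j : ℕ => (ψ j) (ε (n - j) ω)) := hω1.of_norm
    have hg : Summable (fun j : ℕ => (ψ j) (ε (n - 1 - j) ω)) := hω2.of_norm
    have hshift : ∀ j : ℕ, (ψ (j + 1)) (ε (n - ↑(j + 1)) ω) =
        φ ((ψ j) (ε (n - 1 - j) ω)) +
          (if j + 1 ≤ q then (θ (j + 1)) (ε (n - 1 - j) ω) else 0) := by
      intro j
      have hε : n - ↑(j + 1) = n - 1 - ↑j := by push_cast; ring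
      rw [hε, hrec j]
      simp [ContinuousLinearMap.add_apply, ContinuousLinearMap.comp_apply,
        apply_ite (fun T : H →L[ℝ] H => T (ε (n - 1 - ↑j) ω))]
    have hφg : Summable (fun j : ℕ => φ ((ψ j) (ε (n - 1 - j) ω))) :=
      hg.map φ φ.continuous
    have hsum_ite : Summable
        (fun j : ℕ => if j + 1 ≤ q then (θ (j + 1)) (ε (n - 1 - j) ω) else 0) :=
      summable_of_ne_finset_zero (s := Finset.range q)
        (fun j hj => by rw [if_neg]; simp only [Finset.mem_range] at hj; omega)
    have hIcc : (∑' j : ℕ, if j + 1 ≤ q then (θ (j + 1)) (ε (n - 1 - j) ω) else 0) =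
        ∑ j ∈ Finset.Icc 1 q, (θ j) (ε (n - j) ω) := by
      rw [tsum_eq_sum (s := Finset.range q)
        (fun j hj => by rw [if_neg]; simp only [Finset.mem_range] at hj; omega)]
      rw [Finset.sum_congr rfl (fun j hj => if_pos (by simp only [Finset.mem_range] at hj; omega))]
      refine Finset.sum_bij' (fun j _ => j + 1) (fun i _ => i - 1) ?_ ?_ ?_ ?_ ?_
      · intro j hj; simp only [Finset.mem_range] at hj; simp only [Finset.mem_Icc]; omega
      · intro i hi; simp only [Finset.mem_Icc] at hi; simp only [Finset.mem_range]; omega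
      · intro j hj; show j + 1 - 1 = j; omega
      · intro i hi; simp only [Finset.mem_Icc] at hi; show i - 1 + 1 = i; omega
      · intro j hj
        have : n - 1 - (j : ℤ) = n - ↑(j + 1) := by push_cast; ring
        rw [this]
    calc (∑' j : ℕ, (ψ j) (ε (n - j) ω))
        = (ψ 0) (ε (n - (0:ℕ)) ω) + ∑' j : ℕ, (ψ (j + 1)) (ε (n - ↑(j + 1)) ω) :=
          hf.tsum_eq_zero_add
      _ = ε n ω + ∑' j : ℕ, (φ ((ψ j) (ε (n - 1 - j) ω)) +
            (if j + 1 ≤ q then (θ (j + 1)) (ε (n - 1 - j) ω) else 0)) := by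
          rw [tsum_congr hshift, hψ0]
          simp
      _ = ε n ω + (φ (∑' j : ℕ, (ψ j) (ε (n - 1 - j) ω)) +
            ∑ j ∈ Finset.Icc 1 q, (θ j) (ε (n - j) ω)) := by
          rw [hφg.tsum_add hsum_ite, hIcc, φ.map_tsum hg]
      _ = _ := by abel
end

section
/- Let X be a mean-zero H-valued random variable with covariance eigenpairs (λ_l, ν_l), and φ a bounded operator on H. For d ∈ ℕ let Φ^∞ X^∞ denote the d-dimensional vector with l-th component ∑_{l'=d+1}^∞ ⟨φν_{l'},ν_l⟩⟨X,ν_{l'}⟩. Then E‖Φ^∞X^∞‖₂² ≤ ‖φ‖²_{L} · ∑_{l'=d+1}^∞ λ_{l'}. -/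
open MeasureTheory
open scoped RealInnerProductSpace ENNReal

private lemma aux_pointwise {H : Type*} [NormedAddCommGroup H] [InnerProductSpace ℝ H]
    [CompleteSpace H] (ν : HilbertBasis ℕ ℝ H) (φ : H →L[ℝ] H) (d : ℕ) (x : H) :
    ∑ l ∈ Finset.range d,
        (∑' k : ℕ, ⟪φ (ν (d + k)), ν l⟫ * ⟪x, ν (d + k)⟫) ^ 2
      ≤ ‖φ‖ ^ 2 * ∑' k : ℕ, ⟪x, ν (d + k)⟫ ^ 2 := by
  have htotal : Summable (fun l => ⟪x, ν l⟫ • ν l) := by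
    have := (ν.hasSum_repr x).summable
    simpa [ν.repr_apply_apply, real_inner_comm] using this
  have htail : Summable (fun k => ⟪x, ν (d + k)⟫ • ν (d + k)) :=
    htotal.comp_injective (add_right_injective d)
  set Y : H := ∑' k, ⟪x, ν (d + k)⟫ • ν (d + k) with hYdef
  have hYsum : HasSum (fun k => ⟪x, ν (d + k)⟫ • ν (d + k)) Y := htail.hasSum
  have hortho := orthonormal_iff_ite.mp ν.orthonormal
  have hterm : ∀ l, (∑' k : ℕ, ⟪φ (ν (d + k)), ν l⟫ * ⟪x, ν (d + k)⟫) = ⟪φ Y, ν l⟫ := by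
    intro l
    have h := hYsum.mapL ((innerSL ℝ (ν l)).comp φ)
    have hfe : (fun k => ((innerSL ℝ (ν l)).comp φ) (⟪x, ν (d + k)⟫ • ν (d + k)))
        = fun k => ⟪φ (ν (d + k)), ν l⟫ * ⟪x, ν (d + k)⟫ := by
      funext k
      rw [ContinuousLinearMap.comp_apply, innerSL_apply_apply, φ.map_smul,
        real_inner_smul_right, real_inner_comm (φ _) (ν l)]
      ring
    rw [hfe] at h
    rw [h.tsum_eq, ContinuousLinearMap.comp_apply, innerSL_apply_apply, real_inner_comm]
  have hcY : ∀ j, ⟪Y, ν (d + j)⟫ = ⟪x, ν (d + j)⟫ := by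
    intro j
    have h2 := hYsum.mapL (innerSL ℝ (ν (d + j)))
    have h3 : (fun k => (innerSL ℝ (ν (d + j))) (⟪x, ν (d + k)⟫ • ν (d + k)))
        = fun k => if k = j then ⟪x, ν (d + j)⟫ else 0 := by
      funext k
      simp only [innerSL_apply_apply, real_inner_smul_right, hortho (d + j) (d + k)]
      rcases eq_or_ne k j with rfl | hk
      · simp
      · have hne : d + j ≠ d + k := by omega
        simp [hk, hne, Ne.symm hk]
    rw [h3] at h2
    have h4 : HasSum (fun k => if k = j then ⟪x, ν (d + j)⟫ else 0) (⟪x, ν (d + j)⟫) :=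
      hasSum_ite_eq j _
    have h5 := h4.unique h2
    rw [innerSL_apply_apply] at h5
    rw [real_inner_comm]
    exact h5.symm
  have hYsq : HasSum (fun k => ⟪x, ν (d + k)⟫ ^ 2) (‖Y‖ ^ 2) := by
    have h4 := hYsum.mapL (innerSL ℝ Y)
    have h5 : (fun k => (innerSL ℝ Y) (⟪x, ν (d + k)⟫ • ν (d + k)))
        = fun k => ⟪x, ν (d + k)⟫ ^ 2 := by
      funext k
      simp [real_inner_smul_right, hcY k, sq]
    rw [h5] at h4
    rw [innerSL_apply_apply, real_inner_self_eq_norm_sq] at h4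
    exact h4
  calc ∑ l ∈ Finset.range d, (∑' k : ℕ, ⟪φ (ν (d + k)), ν l⟫ * ⟪x, ν (d + k)⟫) ^ 2
      = ∑ l ∈ Finset.range d, ⟪φ Y, ν l⟫ ^ 2 := by
        exact Finset.sum_congr rfl fun l _ => by rw [hterm l]
    _ ≤ ‖φ Y‖ ^ 2 := by
        have h := ν.orthonormal.sum_inner_products_le (φ Y) (s := Finset.range d)
        simpa [Real.norm_eq_abs, sq_abs, real_inner_comm] using h
    _ ≤ (‖φ‖ * ‖Y‖) ^ 2 := pow_le_pow_left₀ (norm_nonneg _) (φ.le_opNorm Y) 2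
    _ = ‖φ‖ ^ 2 * ‖Y‖ ^ 2 := by ring
    _ = ‖φ‖ ^ 2 * ∑' k : ℕ, ⟪x, ν (d + k)⟫ ^ 2 := by rw [hYsq.tsum_eq]

/-- Bound for the truncation error term `Φ^∞ X^∞`:
`E‖Φ^∞X^∞‖₂² ≤ ‖φ‖²_L · ∑_{l'>d} λ_{l'}`. -/
theorem stmt9 {Ω H : Type*} [MeasurableSpace Ω] (μ : Measure Ω) [IsProbabilityMeasure μ]
    [NormedAddCommGroup H] [InnerProductSpace ℝ H] [CompleteSpace H]
    [SecondCountableTopology H]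
    (X : Ω → H) (hX2 : MemLp X 2 μ)
    (hmean : ∀ y : H, ∫ ω, ⟪X ω, y⟫ ∂μ = 0)
    (ν : HilbertBasis ℕ ℝ H) (lam : ℕ → ℝ) (hsum : Summable lam)
    (hvar : ∀ l : ℕ, ∫ ω, ⟪X ω, ν l⟫ ^ 2 ∂μ = lam l)
    (huncorr : ∀ l l' : ℕ, l ≠ l' → ∫ ω, ⟪X ω, ν l⟫ * ⟪X ω, ν l'⟫ ∂μ = 0)
    (φ : H →L[ℝ] H) (d : ℕ) :
    ∫ ω, ∑ l ∈ Finset.range d,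
        (∑' k : ℕ, ⟪φ (ν (d + k)), ν l⟫ * ⟪X ω, ν (d + k)⟫) ^ 2 ∂μ
      ≤ ‖φ‖ ^ 2 * ∑' k : ℕ, lam (d + k) := by
  have hXm := hX2.aestronglyMeasurable
  have hmeas : ∀ y : H, AEStronglyMeasurable (fun ω => ⟪X ω, y⟫) μ := by
    intro y
    have h : (fun ω => ⟪X ω, y⟫) = fun ω => (innerSL ℝ y) (X ω) := by
      funext ω; simp [real_inner_comm]
    rw [h]
    exact (innerSL ℝ y).continuous.comp_aestronglyMeasurable hXm
  have hlam_nonneg : ∀ l, 0 ≤ lam l := fun l =>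
    (hvar l) ▸ integral_nonneg (fun ω => sq_nonneg _)
  have hXsq : Integrable (fun ω => ‖X ω‖ ^ 2) μ := by
    have h := hX2.integrable_norm_rpow two_ne_zero ENNReal.ofNat_ne_top
    have h2 : (fun ω => ‖X ω‖ ^ ((2 : ℝ≥0∞).toReal)) = fun ω => ‖X ω‖ ^ 2 := by
      funext ω
      rw [show ((2 : ℝ≥0∞).toReal) = ((2 : ℕ) : ℝ) by norm_num, Real.rpow_natCast]
    rwa [h2] at h
  have hfk_meas : ∀ k : ℕ, AEStronglyMeasurable (fun ω => ⟪X ω, ν (d + k)⟫ ^ 2) μ := by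
    intro k
    have h : (fun ω => ⟪X ω, ν (d + k)⟫ ^ 2)
        = fun ω => ⟪X ω, ν (d + k)⟫ * ⟪X ω, ν (d + k)⟫ := by
      funext ω; ring
    rw [h]; exact (hmeas _).mul (hmeas _)
  have hfk_int : ∀ k : ℕ, Integrable (fun ω => ⟪X ω, ν (d + k)⟫ ^ 2) μ := by
    intro k
    refine hXsq.mono' (hfk_meas k) (Filter.Eventually.of_forall fun ω => ?_)
    rw [Real.norm_eq_abs, abs_of_nonneg (sq_nonneg _)]
    have h := abs_real_inner_le_norm (X ω) (ν (d + k))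
    have h2 : ⟪X ω, ν (d + k)⟫ ^ 2 ≤ (‖X ω‖ * ‖ν (d + k)‖) ^ 2 := by
      rw [← sq_abs]
      exact pow_le_pow_left₀ (abs_nonneg _) h 2
    simpa [ν.orthonormal.1 (d + k)] using h2
  have hPar : ∀ ω, HasSum (fun l => ⟪X ω, ν l⟫ ^ 2) (‖X ω‖ ^ 2) := by
    intro ω
    have h := ν.hasSum_inner_mul_inner (X ω) (X ω)
    rw [real_inner_self_eq_norm_sq] at h
    convert h using 2 with l
    · rfl
    · rw [sq, real_inner_comm]
  have hS_eq : ∀ ω, (∑' k : ℕ, ⟪X ω, ν (d + k)⟫ ^ 2)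
      = ‖X ω‖ ^ 2 - ∑ l ∈ Finset.range d, ⟪X ω, ν l⟫ ^ 2 := by
    intro ω
    have h := Summable.sum_add_tsum_nat_add (f := fun l => ⟪X ω, ν l⟫ ^ 2) d (hPar ω).summable
    rw [(hPar ω).tsum_eq] at h
    have h2 : (∑' k : ℕ, ⟪X ω, ν (k + d)⟫ ^ 2) = ∑' k : ℕ, ⟪X ω, ν (d + k)⟫ ^ 2 :=
      tsum_congr fun k => by rw [add_comm]
    rw [h2] at h
    linarith
  have hS_meas : AEStronglyMeasurable (fun ω => ∑' k : ℕ, ⟪X ω, ν (d + k)⟫ ^ 2) μ := by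
    have h : (fun ω => ∑' k : ℕ, ⟪X ω, ν (d + k)⟫ ^ 2)
        = fun ω => ‖X ω‖ ^ 2 - ∑ l ∈ Finset.range d, ⟪X ω, ν l⟫ ^ 2 := funext hS_eq
    rw [h]
    exact hXsq.aestronglyMeasurable.sub
      (Finset.aestronglyMeasurable_fun_sum _ fun l _ => by
        have h : (fun ω => ⟪X ω, ν l⟫ ^ 2) = fun ω => ⟪X ω, ν l⟫ * ⟪X ω, ν l⟫ := by
          funext ω; ring
        rw [h]; exact (hmeas _).mul (hmeas _))
  have hS_int : Integrable (fun ω => ∑' k : ℕ, ⟪X ω, ν (d + k)⟫ ^ 2) μ := by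
    refine hXsq.mono' hS_meas (Filter.Eventually.of_forall fun ω => ?_)
    rw [Real.norm_eq_abs, abs_of_nonneg (tsum_nonneg fun k => sq_nonneg _), hS_eq ω]
    have h : 0 ≤ ∑ l ∈ Finset.range d, ⟪X ω, ν l⟫ ^ 2 :=
      Finset.sum_nonneg fun _ _ => sq_nonneg _
    linarith
  have hS_int_eq : ∫ ω, ∑' k : ℕ, ⟪X ω, ν (d + k)⟫ ^ 2 ∂μ = ∑' k : ℕ, lam (d + k) := by
    rw [integral_tsum (fun k => hfk_meas k) ?_]
    · exact tsum_congr fun k => hvar (d + k)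
    · have h : ∀ k : ℕ, ∫⁻ ω, ‖⟪X ω, ν (d + k)⟫ ^ 2‖ₑ ∂μ = ENNReal.ofReal (lam (d + k)) := by
        intro k
        have hcong : ∀ ω, (‖⟪X ω, ν (d + k)⟫ ^ 2‖ₑ)
            = ENNReal.ofReal (⟪X ω, ν (d + k)⟫ ^ 2) :=
          fun ω => Real.enorm_eq_ofReal (sq_nonneg _)
        simp_rw [hcong]
        rw [← ofReal_integral_eq_lintegral_ofReal (hfk_int k)
          (Filter.Eventually.of_forall fun ω => sq_nonneg _), hvar (d + k)]
      simp_rw [h]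
      rw [← ENNReal.ofReal_tsum_of_nonneg (fun k => hlam_nonneg _)
        (hsum.comp_injective (add_right_injective d))]
      exact ENNReal.ofReal_ne_top
  calc ∫ ω, ∑ l ∈ Finset.range d,
        (∑' k : ℕ, ⟪φ (ν (d + k)), ν l⟫ * ⟪X ω, ν (d + k)⟫) ^ 2 ∂μ
      ≤ ∫ ω, ‖φ‖ ^ 2 * ∑' k : ℕ, ⟪X ω, ν (d + k)⟫ ^ 2 ∂μ := by
        refine integral_mono_of_nonneg
          (Filter.Eventually.of_forall fun ω => Finset.sum_nonneg fun _ _ => sq_nonneg _)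
          (hS_int.const_mul _)
          (Filter.Eventually.of_forall fun ω => aux_pointwise ν φ d (X ω))
    _ = ‖φ‖ ^ 2 * ∫ ω, ∑' k : ℕ, ⟪X ω, ν (d + k)⟫ ^ 2 ∂μ := integral_const_mul _ _
    _ = ‖φ‖ ^ 2 * ∑' k : ℕ, lam (d + k) := by rw [hS_int_eq]
end

section
/- Let G be an L-closed subspace of L²_H (closed under composition with bounded operators), X ∈ L²_H, and X̂ = P_G X the orthogonal projection of X onto G (so E⟨X − X̂, Y⟩ = 0 for all Y ∈ G). Let (ν_l) be an orthonormal basis of H. Then for all j, l ∈ ℕ and all Y ∈ G: E[⟨X − X̂, ν_l⟩⟨Y, ν_j⟩] = 0. -/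
open MeasureTheory
open scoped RealInnerProductSpace

/-- Orthogonality of the functional prediction error holds also scorewise: if
`X̂ = P_G X` where `G` is an L-closed subspace, then for all `j, l` and `Y ∈ G`,
`E[⟨X − X̂, ν_l⟩⟨Y, ν_j⟩] = 0`. -/
theorem stmt18 {Ω H : Type*} [MeasurableSpace Ω] (μ : Measure Ω) [IsProbabilityMeasure μ]
    [NormedAddCommGroup H] [InnerProductSpace ℝ H] [CompleteSpace H]
    [SecondCountableTopology H]
    (G : Set (Ω → H))
    (hG : ∀ Y ∈ G, ∀ g : H →L[ℝ] H, (fun ω => g (Y ω)) ∈ G)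
    (X Xhat : Ω → H) (hXhat : Xhat ∈ G)
    (hproj : ∀ Y ∈ G, ∫ ω, ⟪X ω - Xhat ω, Y ω⟫ ∂μ = 0)
    (ν : HilbertBasis ℕ ℝ H) :
    ∀ (j l : ℕ), ∀ Y ∈ G,
      ∫ ω, ⟪X ω - Xhat ω, ν l⟫ * ⟪Y ω, ν j⟫ ∂μ = 0 := by
  intro j l Y hY
  have h := hproj _ (hG Y hY ((innerSL ℝ (ν j)).smulRight (ν l)))
  simpa [ContinuousLinearMap.smulRight_apply, innerSL_apply_apply, real_inner_smul_right,
    mul_comm, real_inner_comm] using h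
end
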